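/- Let C ⊆ E be a convex set and let F be a proper exposed face of C such that every touching cone of C contained in N(C,F) is a normal cone of C. Then F can be written as an intersection of coatoms of the exposed face lattice of C: there exist proper exposed faces G_1, …, G_d of C, each such that the only exposed face of C strictly containing it is C itself, with d ≤ dim(N(C,F)) − dim(lin(C)^⊥) and F = G_1 ∩ ⋯ ∩ G_d. -/

import Mathlib

open scoped Pointwise RealInnerProductSpace

variable {E : Type*} [NormedAddCommGroup E] [InnerProductSpace ℝ E] [FiniteDimensional ℝ E]

/-- `F` is a face of the convex set `C`: a convex subset of `C` such that whenever an open
segment between two points of `C` meets `F`, both endpoints belong to `F`. -/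
def IsFace (C F : Set E) : Prop :=
  Convex ℝ F ∧ F ⊆ C ∧
    ∀ x ∈ C, ∀ y ∈ C, (openSegment ℝ x y ∩ F).Nonempty → x ∈ F ∧ y ∈ F

/-- The exposed face `F⊥(C,u)` of `C` by the vector `u`: the points of `C` where `⟨u,·⟩`
attains its supremum over `C`. -/
def expFace (C : Set E) (u : E) : Set E :=
  {x ∈ C | ∀ y ∈ C, ⟪u, y⟫ ≤ ⟪u, x⟫}

/-- `F` is an exposed face of `C`: either `∅`, or `C`, or `F⊥(C,u)` for some nonzero `u`. -/
def IsExpFace (C F : Set E) : Prop :=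
  F = ∅ ∨ F = C ∨ ∃ u : E, u ≠ 0 ∧ F = expFace C u

/-- The normal cone `N(C,x)` of `C` at the point `x`. -/
def normalCone (C : Set E) (x : E) : Set E :=
  {u | ∀ y ∈ C, ⟪u, y - x⟫ ≤ 0}

/-- The normal cone `N(C,F)` of `C` at a subset `F`; for a nonempty convex `F ⊆ C` it agrees
with `normalCone C x` for any `x` in the relative interior of `F` (all these coincide), and
for `F = ∅` it is all of `E`. -/
def normalConeOf (C F : Set E) : Set E :=
  ⋂ x ∈ intrinsicInterior ℝ F, normalCone C x

/-- `N` is a normal cone of `C`: the normal cone of some face of `C`. -/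
def IsNormalCone (C N : Set E) : Prop :=
  ∃ F, IsFace C F ∧ N = normalConeOf C F

/-- `T` is a touching cone of `C`: a nonempty face of a normal cone of `C`. -/
def IsTouchingCone (C T : Set E) : Prop :=
  T.Nonempty ∧ ∃ N, IsNormalCone C N ∧ IsFace N T

/-- The positive hull of a set: all finite nonnegative combinations (`posHull ∅ = {0}`). -/
def posHull (S : Set E) : Set E :=
  {x | ∃ (k : ℕ) (c : Fin k → ℝ) (s : Fin k → E),
    (∀ i, 0 ≤ c i) ∧ (∀ i, s i ∈ S) ∧ x = ∑ i, c i • s i}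

/-- A vector `u` is sharp normal for `C` if every `x ∈ ri(F⊥(C,u))` satisfies
`u ∈ ri(N(C,x))`. -/
def SharpNormal (C : Set E) (u : E) : Prop :=
  ∀ x ∈ intrinsicInterior ℝ (expFace C u), u ∈ intrinsicInterior ℝ (normalCone C x)

/-- A point `x` is sharp exposed in `C` if every nonzero `u ∈ ri(N(C,x))` satisfies
`x ∈ ri(F⊥(C,u))`. -/
def SharpExposed (C : Set E) (x : E) : Prop :=
  ∀ u ∈ intrinsicInterior ℝ (normalCone C x), u ≠ 0 → x ∈ intrinsicInterior ℝ (expFace C u)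

/-- The smallest exposed face of `C` containing `F`: the intersection of all exposed faces
of `C` containing `F`. -/
def supExp (C F : Set E) : Set E :=
  ⋂₀ {G | IsExpFace C G ∧ F ⊆ G}

/-- The polar body of `K`. -/
def polarBody (K : Set E) : Set E := {u | ∀ y ∈ K, ⟪u, y⟫ ≤ 1}

set_option linter.unusedSectionVars false
set_option linter.unusedVariables false
set_option maxHeartbeats 1000000
open Module Set Filter







/-- the ray generated by a vector -/
def rayOf (u : E) : Set E := {x | ∃ t : ℝ, 0 ≤ t ∧ x = t • u}

lemma isFace_trans {A B T : Set E} (h1 : IsFace A B) (h2 : IsFace B T) : IsFace A T := by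
  obtain ⟨hc1, hs1, hf1⟩ := h1
  obtain ⟨hc2, hs2, hf2⟩ := h2
  refine ⟨hc2, hs2.trans hs1, fun x hx y hy ⟨z, hz1, hz2⟩ => ?_⟩
  have hxy : x ∈ B ∧ y ∈ B := hf1 x hx y hy ⟨z, hz1, hs2 hz2⟩
  exact hf2 x hxy.1 y hxy.2 ⟨z, hz1, hz2⟩

lemma isFace_rfl {A : Set E} (h : Convex ℝ A) : IsFace A A :=
  ⟨h, Subset.rfl, fun x hx y hy _ => ⟨hx, hy⟩⟩

lemma expFace_subset (C : Set E) (u : E) : expFace C u ⊆ C := fun _ h => h.1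

lemma expFace_convex {C : Set E} (hC : Convex ℝ C) (u : E) : Convex ℝ (expFace C u) := by
  intro x hx y hy a b ha hb hab
  refine ⟨hC hx.1 hy.1 ha hb hab, fun z hz => ?_⟩
  have h1 := hx.2 z hz
  have h2 := hy.2 z hz
  have h3 : ⟪u, a • x + b • y⟫ = a * ⟪u, x⟫ + b * ⟪u, y⟫ := by
    rw [inner_add_right, inner_smul_right, inner_smul_right]
  rw [h3]
  have e1 : (a+b) * ⟪u, z⟫ = ⟪u, z⟫ := by rw [hab, one_mul]
  linarith [mul_le_mul_of_nonneg_left h1 ha, mul_le_mul_of_nonneg_left h2 hb, e1]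

lemma expFace_isFace {C : Set E} (hC : Convex ℝ C) (u : E) : IsFace C (expFace C u) := by
  refine ⟨expFace_convex hC u, expFace_subset C u, ?_⟩
  rintro x hx y hy ⟨z, ⟨a, b, ha, hb, hab, rfl⟩, hzF⟩
  have hxz : ⟪u, x⟫ ≤ ⟪u, a • x + b • y⟫ := hzF.2 x hx
  have hyz : ⟪u, y⟫ ≤ ⟪u, a • x + b • y⟫ := hzF.2 y hy
  have hz' : ⟪u, a • x + b • y⟫ = a * ⟪u, x⟫ + b * ⟪u, y⟫ := by
    rw [inner_add_right, inner_smul_right, inner_smul_right]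
  have e1 : (a+b) * ⟪u, x⟫ = ⟪u, x⟫ := by rw [hab, one_mul]
  have e2 : (a+b) * ⟪u, y⟫ = ⟪u, y⟫ := by rw [hab, one_mul]
  have hbpx : b * ⟪u, x⟫ ≤ b * ⟪u, y⟫ := by linarith
  have hapy : a * ⟪u, y⟫ ≤ a * ⟪u, x⟫ := by linarith
  have heq : ⟪u, x⟫ = ⟪u, y⟫ :=
    le_antisymm ((mul_le_mul_iff_right₀ hb).mp hbpx) ((mul_le_mul_iff_right₀ ha).mp hapy)
  have hux : ⟪u, x⟫ = ⟪u, a • x + b • y⟫ := by rw [hz', ← heq]; linarith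
  have huy : ⟪u, y⟫ = ⟪u, a • x + b • y⟫ := by rw [hz', heq]; linarith
  exact ⟨⟨hx, fun w hw => hux ▸ hzF.2 w hw⟩, ⟨hy, fun w hw => huy ▸ hzF.2 w hw⟩⟩

/-- pointed closed convex cone -/
def IsPCone (K : Set E) : Prop :=
  IsClosed K ∧ Convex ℝ K ∧ (0:E) ∈ K ∧ (∀ t : ℝ, 0 ≤ t → ∀ x ∈ K, t • x ∈ K) ∧
    (∀ x ∈ K, -x ∈ K → x = 0)

/-- `u` is a nonnegative combination of extreme vectors of `K`. -/
def ConeRep (K : Set E) (u : E) : Prop :=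
  ∃ (k : ℕ) (c : Fin k → ℝ) (w : Fin k → E), (∀ i, 0 ≤ c i) ∧
    (∀ i, w i ∈ K ∧ w i ≠ 0 ∧ IsFace K (rayOf (w i))) ∧ u = ∑ i, c i • w i

lemma ConeRep.zero (K : Set E) : ConeRep K 0 :=
  ⟨0, ![], ![], fun i => i.elim0, fun i => i.elim0, by simp⟩

lemma ConeRep.add {K : Set E} {a b : E} (ha : ConeRep K a) (hb : ConeRep K b) :
    ConeRep K (a + b) := by
  obtain ⟨k1, c1, w1, hc1, hw1, rfl⟩ := ha
  obtain ⟨k2, c2, w2, hc2, hw2, rfl⟩ := hb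
  refine ⟨k1 + k2, Fin.append c1 c2, Fin.append w1 w2, ?_, ?_, ?_⟩
  · intro i
    refine Fin.addCases (fun j => ?_) (fun j => ?_) i
    · rw [Fin.append_left]; exact hc1 j
    · rw [Fin.append_right]; exact hc2 j
  · intro i
    refine Fin.addCases (fun j => ?_) (fun j => ?_) i
    · rw [Fin.append_left]; exact hw1 j
    · rw [Fin.append_right]; exact hw2 j
  · rw [Fin.sum_univ_add]
    simp [Fin.append_left, Fin.append_right]

lemma ConeRep.smul {K : Set E} {a : E} {t : ℝ} (ht : 0 ≤ t) (ha : ConeRep K a) :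
    ConeRep K (t • a) := by
  obtain ⟨k, c, w, hc, hw, rfl⟩ := ha
  exact ⟨k, fun i => t * c i, w, fun i => mul_nonneg ht (hc i),
    hw, by rw [Finset.smul_sum]; simp [mul_smul]⟩

lemma ConeRep.of_face {K K₀ : Set E} (hf : IsFace K K₀) {u : E} (h : ConeRep K₀ u) :
    ConeRep K u := by
  obtain ⟨k, c, w, hc, hw, rfl⟩ := h
  exact ⟨k, c, w, hc, fun i => ⟨hf.2.1 (hw i).1, (hw i).2.1,
    isFace_trans hf (hw i).2.2⟩, rfl⟩



lemma caratheodory_cone (P : E → Prop) :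
    ∀ (k : ℕ) (c : Fin k → ℝ) (w : Fin k → E),
    (∀ i, 0 ≤ c i) → (∀ i, P (w i)) →
    ∃ (d : ℕ) (c' : Fin d → ℝ) (w' : Fin d → E), (∀ i, 0 < c' i) ∧ (∀ i, P (w' i)) ∧
      LinearIndependent ℝ w' ∧ ∑ i, c' i • w' i = ∑ i, c i • w i := by
  intro k
  induction k with
  | zero =>
    intro c w hc hw
    exact ⟨0, ![], ![], fun i => i.elim0, fun i => i.elim0, linearIndependent_empty_type, by simp⟩
  | succ m IH =>
    intro c w hc hw
    -- helper: if some coefficient vanishes, drop it and use the induction hypothesis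
    have remove : ∀ (c : Fin (m+1) → ℝ) (w : Fin (m+1) → E), (∀ i, 0 ≤ c i) →
        (∀ i, P (w i)) → ∀ i0, c i0 = 0 →
        ∃ (d : ℕ) (c' : Fin d → ℝ) (w' : Fin d → E), (∀ i, 0 < c' i) ∧ (∀ i, P (w' i)) ∧
          LinearIndependent ℝ w' ∧ ∑ i, c' i • w' i = ∑ i, c i • w i := by
      intro c w hc hw i0 h0
      obtain ⟨d, c', w', h1, h2, h3, h4⟩ :=
        IH (fun j => c (i0.succAbove j)) (fun j => w (i0.succAbove j))
          (fun j => hc _) (fun j => hw _)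
      refine ⟨d, c', w', h1, h2, h3, ?_⟩
      rw [h4, Fin.sum_univ_succAbove (fun i => c i • w i) i0, h0, zero_smul, zero_add]
    by_cases hz : ∃ i, c i = 0
    · obtain ⟨i0, h0⟩ := hz
      exact remove c w hc hw i0 h0
    · push_neg at hz
      by_cases hli : LinearIndependent ℝ w
      · exact ⟨m+1, c, w, fun i => lt_of_le_of_ne (hc i) (Ne.symm (hz i)), hw, hli, rfl⟩
      · obtain ⟨g, hgsum, i1, hgi⟩ := Fintype.not_linearIndependent_iff.mp hli
        -- replace g by -g if necessary so that g i1 > 0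
        obtain ⟨g, hgsum, i1, hgi⟩ :
            ∃ (g : Fin (m+1) → ℝ), ∑ i, g i • w i = 0 ∧ ∃ i1, 0 < g i1 := by
          rcases lt_or_gt_of_ne hgi with h | h
          · refine ⟨fun i => -(g i), ?_, i1, ?_⟩
            · simp only [neg_smul, Finset.sum_neg_distrib, hgsum, neg_zero]
            · show 0 < -(g i1); linarith
          · exact ⟨g, hgsum, i1, h⟩
        set s : Finset (Fin (m+1)) := Finset.univ.filter (fun i => 0 < g i) with hs
        have hsne : s.Nonempty := ⟨i1, by simp [hs, hgi]⟩
        obtain ⟨i2, hi2s, hi2min⟩ := s.exists_min_image (fun i => c i / g i) hsne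
        have hgi2 : 0 < g i2 := by simpa [hs] using hi2s
        set r : ℝ := c i2 / g i2 with hr
        have hrpos : 0 < r := div_pos (lt_of_le_of_ne (hc i2) (Ne.symm (hz i2))) hgi2
        set c2 : Fin (m+1) → ℝ := fun i => c i - r * g i with hc2
        have hc2nn : ∀ i, 0 ≤ c2 i := by
          intro i
          by_cases hgpos : 0 < g i
          · have := hi2min i (by simp [hs, hgpos])
            have : r * g i ≤ c i := by
              rw [← div_mul_cancel₀ (c i) (ne_of_gt hgpos)]
              exact mul_le_mul_of_nonneg_right (this) (le_of_lt hgpos) |>.trans_eq rfl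
            simp [hc2]; linarith
          · push_neg at hgpos
            have : r * g i ≤ 0 := mul_nonpos_of_nonneg_of_nonpos hrpos.le hgpos
            simp [hc2]; nlinarith [hc i]
        have hc2i2 : c2 i2 = 0 := by
          simp [hc2, hr, div_mul_cancel₀ (c i2) (ne_of_gt hgi2)]
        have hsum2 : ∑ i, c2 i • w i = ∑ i, c i • w i := by
          simp only [hc2, sub_smul, mul_smul, Finset.sum_sub_distrib]
          rw [← Finset.smul_sum, hgsum, smul_zero, sub_zero]
        obtain ⟨d, c', w', h1, h2, h3, h4⟩ := remove c2 w hc2nn hw i2 hc2i2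
        exact ⟨d, c', w', h1, h2, h3, h4.trans hsum2⟩



def IsPCone' (K : Set E) : Prop :=
  IsClosed K ∧ Convex ℝ K ∧ (0:E) ∈ K ∧ (∀ t : ℝ, 0 ≤ t → ∀ x ∈ K, t • x ∈ K) ∧
    (∀ x ∈ K, -x ∈ K → x = 0)

def SK (K : Set E) : Set E := {z | ∃ k ∈ K, ∃ p ∈ (Submodule.span ℝ K)ᗮ, z = k + p}

lemma subset_SK {K : Set E} : K ⊆ SK K := fun k hk => ⟨k, hk, 0, zero_mem _, by simp⟩

lemma orth_subset_SK {K : Set E} (h0 : (0:E) ∈ K) :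
    ((Submodule.span ℝ K)ᗮ : Set E) ⊆ SK K :=
  fun p hp => ⟨0, h0, p, hp, by simp⟩

lemma SK_convex {K : Set E} (hK : Convex ℝ K) : Convex ℝ (SK K) := by
  rintro x ⟨k1, hk1, p1, hp1, rfl⟩ y ⟨k2, hk2, p2, hp2, rfl⟩ a b ha hb hab
  refine ⟨a • k1 + b • k2, hK hk1 hk2 ha hb hab, a • p1 + b • p2,
    Submodule.add_mem _ (Submodule.smul_mem _ _ hp1) (Submodule.smul_mem _ _ hp2), ?_⟩
  module

lemma mem_K_of_SK {K : Set E} {x : E} (hx : x ∈ Submodule.span ℝ K) (h : x ∈ SK K) :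
    x ∈ K := by
  obtain ⟨k, hk, p, hp, rfl⟩ := h
  have hkV : k ∈ Submodule.span ℝ K := Submodule.subset_span hk
  have hpV : p ∈ Submodule.span ℝ K := by
    have := Submodule.sub_mem _ hx hkV
    simpa using this
  have hp0 : p = 0 := by
    have h2 := (Submodule.mem_orthogonal _ _).mp hp p hpV
    exact inner_self_eq_zero.mp h2
  simpa [hp0] using hk

lemma SK_interior_nonempty {K : Set E} (hK : Convex ℝ K) (h0 : (0:E) ∈ K) :
    (interior (SK K)).Nonempty := by
  rw [Convex.interior_nonempty_iff_affineSpan_eq_top (SK_convex hK)]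
  have h0' : (0:E) ∈ SK K := subset_SK h0
  have hspan : Submodule.span ℝ (SK K) = ⊤ := by
    rw [eq_top_iff]
    have hV : Submodule.span ℝ K ≤ Submodule.span ℝ (SK K) := Submodule.span_mono subset_SK
    have hVp : (Submodule.span ℝ K)ᗮ ≤ Submodule.span ℝ (SK K) :=
      fun x hx => Submodule.subset_span (orth_subset_SK h0 hx)
    calc (⊤ : Submodule ℝ E) = Submodule.span ℝ K ⊔ (Submodule.span ℝ K)ᗮ :=
          (Submodule.isCompl_orthogonal_of_hasOrthogonalProjection.sup_eq_top).symm
      _ ≤ Submodule.span ℝ (SK K) := sup_le hV hVp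
  have hcoe : (affineSpan ℝ (SK K) : Set E) = Set.univ := by
    rw [← Set.insert_eq_self.mpr h0', affineSpan_insert_zero, hspan]
    simp
  apply AffineSubspace.coe_injective
  rw [hcoe, AffineSubspace.top_coe]

lemma pcone_push {K : Set E} (hK : IsPCone' K) {a b : E} (ha : a ∈ K)
    (hbV : b ∈ Submodule.span ℝ K) (hbn : -b ∉ K) :
    ∃ s : ℝ, 0 ≤ s ∧ a - s • b ∈ K ∧ a - s • b ∉ interior (SK K) := by
  obtain ⟨hcl, hcv, h0, hsm, hpt⟩ := hK
  set T : Set ℝ := {t | 0 ≤ t ∧ a - t • b ∈ K} with hT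
  have hTne : T.Nonempty := ⟨0, le_refl 0, by simpa using ha⟩
  have hTcl : IsClosed T := by
    have heq : T = (Set.Ici 0) ∩ ((fun t : ℝ => a - t • b) ⁻¹' K) := by
      ext t; simp [hT, Set.mem_Ici]
    rw [heq]
    exact isClosed_Ici.inter (hcl.preimage (by continuity))
  have hTbdd : BddAbove T := by
    by_contra hb'
    have hex : ∀ n : ℕ, ∃ t, t ∈ T ∧ (n:ℝ) < t := by
      intro n
      by_contra hno; push_neg at hno
      exact hb' ⟨n, fun t ht => hno t ht⟩
    choose t ht hlt using hex
    have htpos : ∀ n : ℕ, (0:ℝ) < t (n+1) := by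
      intro n
      have h1 := hlt (n+1)
      have h2 : (0:ℝ) ≤ (n:ℝ) := Nat.cast_nonneg n
      push_cast at h1
      linarith
    have hmem : ∀ n : ℕ, (t (n+1))⁻¹ • a - b ∈ K := by
      intro n
      have h1 : (t (n+1))⁻¹ • (a - t (n+1) • b) ∈ K :=
        hsm _ (inv_nonneg.mpr (htpos n).le) _ (ht (n+1)).2
      have h2 : (t (n+1))⁻¹ • (a - t (n+1) • b) = (t (n+1))⁻¹ • a - b := by
        rw [smul_sub, smul_smul, inv_mul_cancel₀ (ne_of_gt (htpos n)), one_smul]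
      rwa [h2] at h1
    have hmono : ∀ n : ℕ, (n:ℝ) ≤ t (n+1) := by
      intro n
      have h1 := hlt (n+1)
      push_cast at h1
      linarith
    have htop : Tendsto (fun n : ℕ => t (n+1)) atTop atTop :=
      tendsto_atTop_mono hmono tendsto_natCast_atTop_atTop
    have h1 : Tendsto (fun n : ℕ => (t (n+1))⁻¹) atTop (nhds 0) :=
      tendsto_inv_atTop_zero.comp htop
    have h2 : Tendsto (fun n : ℕ => (t (n+1))⁻¹ • a) atTop (nhds 0) := by
      simpa using h1.smul_const a
    have hlim : Tendsto (fun n : ℕ => (t (n+1))⁻¹ • a - b) atTop (nhds (-b)) := by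
      simpa using h2.sub_const b
    exact hbn (hcl.mem_of_tendsto hlim (Filter.Eventually.of_forall hmem))
  set s := sSup T with hs
  have hsT : s ∈ T := hTcl.csSup_mem hTne hTbdd
  refine ⟨s, hsT.1, hsT.2, ?_⟩
  intro hint
  obtain ⟨ε, hε, hball⟩ := Metric.mem_nhds_iff.mp (isOpen_interior.mem_nhds hint)
  have hbne : b ≠ 0 := by
    rintro rfl
    exact hbn (by simpa using h0)
  have hnb : 0 < ‖b‖ := norm_pos_iff.mpr hbne
  set δ := ε / (2 * ‖b‖) with hδ
  have hδpos : 0 < δ := by positivity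
  have hmem2 : a - (s + δ) • b ∈ SK K := by
    apply interior_subset
    apply hball
    have : dist (a - (s + δ) • b) (a - s • b) = δ * ‖b‖ := by
      rw [dist_eq_norm]
      have : a - (s + δ) • b - (a - s • b) = -(δ • b) := by module
      rw [this, norm_neg, norm_smul, Real.norm_eq_abs, abs_of_pos hδpos]
    rw [Metric.mem_ball, this, hδ]
    rw [div_mul_eq_mul_div, mul_comm]
    rw [div_lt_iff₀ (by positivity)]
    nlinarith
  have hmemV : a - (s + δ) • b ∈ Submodule.span ℝ K :=
    Submodule.sub_mem _ (Submodule.subset_span ha) (Submodule.smul_mem _ _ hbV)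
  have hTs : s + δ ∈ T := ⟨by linarith [hsT.1], mem_K_of_SK hmemV hmem2⟩
  have := le_csSup hTbdd hTs
  linarith

-- continuation; assumes part1-3 context. For testing, paste minimal deps.
lemma pcone_bdry {K : Set E} (hK : IsPCone' K) {a : E} (ha : a ∈ K)
    (hbd : a ∉ interior (SK K)) :
    ∃ K₀ : Set E, IsPCone' K₀ ∧ a ∈ K₀ ∧ IsFace K K₀ ∧
      finrank ℝ (Submodule.span ℝ K₀) < finrank ℝ (Submodule.span ℝ K) := by
  obtain ⟨hcl, hcv, h0, hsm, hpt⟩ := hK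
  obtain ⟨f, hf⟩ :=
    geometric_hahn_banach_open_point ((SK_convex hcv).interior) isOpen_interior hbd
  obtain ⟨z0, hz0⟩ := SK_interior_nonempty hcv h0
  -- f ≤ f a on SK K
  have hle : ∀ z ∈ SK K, f z ≤ f a := by
    intro z hz
    have hseg : ∀ t ∈ Set.Ioo (0:ℝ) 1, f ((1 - t) • z0 + t • z) ≤ f a := by
      intro t ht
      refine le_of_lt (hf _ ?_)
      exact (SK_convex hcv).combo_interior_closure_mem_interior hz0 (subset_closure hz)
        (by linarith [ht.2]) (le_of_lt ht.1) (by ring)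
    have hcont : Continuous (fun t : ℝ => f ((1 - t) • z0 + t • z)) := by continuity
    have hne : (nhdsWithin (1:ℝ) (Set.Ioo 0 1)).NeBot := by
      apply mem_closure_iff_nhdsWithin_neBot.mp
      rw [closure_Ioo (by norm_num : (0:ℝ) ≠ 1)]
      exact ⟨by norm_num, le_refl 1⟩
    have htend : Tendsto (fun t : ℝ => f ((1 - t) • z0 + t • z))
        (nhdsWithin (1:ℝ) (Set.Ioo 0 1)) (nhds ((fun t : ℝ => f ((1 - t) • z0 + t • z)) 1)) :=
      (hcont.tendsto 1).mono_left nhdsWithin_le_nhds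
    have := le_of_tendsto htend (eventually_nhdsWithin_of_forall hseg)
    simpa using this
  have hfa0 : f a = 0 := by
    have h2 : f ((2:ℝ) • a) ≤ f a := hle _ (subset_SK (hsm 2 (by norm_num) a ha))
    rw [map_smul, smul_eq_mul] at h2
    have h3 : (0:ℝ) ≤ f a := by
      have := hle 0 (subset_SK h0)
      rw [map_zero] at this
      linarith
    linarith
  have hforth : ∀ p ∈ (Submodule.span ℝ K)ᗮ, f p = 0 := by
    intro p hp
    have h1 : f p ≤ 0 := hfa0 ▸ hle p (orth_subset_SK h0 hp)
    have h2 : f (-p) ≤ 0 := hfa0 ▸ hle (-p) (orth_subset_SK h0 (neg_mem hp))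
    rw [map_neg] at h2
    linarith
  have hKle : ∀ x ∈ K, f x ≤ 0 := fun x hx => hfa0 ▸ hle x (subset_SK hx)
  obtain ⟨k0, hk0K, p0, hp0, hz0eq⟩ : z0 ∈ SK K := interior_subset hz0
  have hz0lt : f z0 < f a := hf z0 hz0
  have hk0 : f k0 < 0 := by
    have he : f z0 = f k0 + f p0 := by rw [hz0eq, map_add]
    rw [hforth p0 hp0] at he
    rw [hfa0] at hz0lt
    linarith
  refine ⟨{x ∈ K | f x = 0}, ⟨?_, ?_, ?_, ?_, ?_⟩, ⟨ha, hfa0⟩, ⟨?_, ?_, ?_⟩, ?_⟩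
  · exact hcl.inter (isClosed_eq (map_continuous f) continuous_const)
  · intro x hx y hy s t hs ht hst
    refine ⟨hcv hx.1 hy.1 hs ht hst, ?_⟩
    rw [map_add, map_smul, map_smul, hx.2, hy.2, smul_eq_mul, smul_eq_mul]
    ring
  · exact ⟨h0, map_zero f⟩
  · intro t ht x hx
    exact ⟨hsm t ht x hx.1, by rw [map_smul, hx.2, smul_eq_mul, mul_zero]⟩
  · exact fun x hx hnx => hpt x hx.1 hnx.1
  -- face
  · intro x hx y hy s t hs ht hst
    refine ⟨hcv hx.1 hy.1 hs ht hst, ?_⟩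
    rw [map_add, map_smul, map_smul, hx.2, hy.2, smul_eq_mul, smul_eq_mul]
    ring
  · exact fun x hx => hx.1
  · rintro x hx y hy ⟨z, ⟨s, t, hs, ht, hst, rfl⟩, hzK, hz0'⟩
    have hfx := hKle x hx
    have hfy := hKle y hy
    have hsum : s * f x + t * f y = 0 := by
      rw [← smul_eq_mul, ← smul_eq_mul, ← map_smul, ← map_smul, ← map_add]
      exact hz0'
    have hx0 : f x = 0 := by nlinarith
    have hy0 : f y = 0 := by nlinarith
    exact ⟨⟨hx, hx0⟩, ⟨hy, hy0⟩⟩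
  · have hsub : Submodule.span ℝ {x ∈ K | f x = 0} ≤
        Submodule.span ℝ K ⊓ LinearMap.ker (f : E →ₗ[ℝ] ℝ) := by
      rw [Submodule.span_le]
      rintro x ⟨hxK, hx0⟩
      exact ⟨Submodule.subset_span hxK, hx0⟩
    have hlt : Submodule.span ℝ K ⊓ LinearMap.ker (f : E →ₗ[ℝ] ℝ) < Submodule.span ℝ K := by
      rw [lt_iff_le_and_ne]
      refine ⟨inf_le_left, fun he => ?_⟩
      have : k0 ∈ Submodule.span ℝ K ⊓ LinearMap.ker (f : E →ₗ[ℝ] ℝ) := by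
        rw [he]; exact Submodule.subset_span hk0K
      exact absurd this.2 (by simpa [LinearMap.mem_ker] using ne_of_lt hk0)
    exact lt_of_le_of_lt (Submodule.finrank_mono hsub) (Submodule.finrank_lt_finrank_of_lt hlt)

lemma phase1 : ∀ (n : ℕ) (K : Set E), IsPCone' K →
    finrank ℝ (Submodule.span ℝ K) ≤ n → ∀ u ∈ K, ConeRep K u := by
  intro n
  induction n with
  | zero =>
    intro K hK hrk u hu
    have hsp : Submodule.span ℝ K = ⊥ :=
      Submodule.finrank_eq_zero.mp (le_antisymm hrk (Nat.zero_le _))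
    have hu0 : u = 0 := by
      have := Submodule.subset_span (R := ℝ) hu
      rw [hsp] at this
      simpa using this
    exact hu0 ▸ ConeRep.zero K
  | succ n IH =>
    intro K hK hrk u hu
    by_cases hu0 : u = 0
    · exact hu0 ▸ ConeRep.zero K
    by_cases hA : ∀ y ∈ K, ∃ t : ℝ, y = t • u
    · -- K is the ray generated by u
      have hray : rayOf u = K := by
        ext y
        constructor
        · rintro ⟨t, ht, rfl⟩
          exact hK.2.2.2.1 t ht u hu
        · intro hy
          obtain ⟨t, rfl⟩ := hA y hy
          refine ⟨t, ?_, rfl⟩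
          by_contra hneg
          push_neg at hneg
          have hmem : -u ∈ K := by
            have h1 : (-t⁻¹) • (t • u) ∈ K := by
              apply hK.2.2.2.1 _ _ _ hy
              rw [neg_nonneg]
              exact inv_nonpos.mpr hneg.le
            have h2 : (-t⁻¹) • (t • u) = -u := by
              rw [smul_smul, neg_mul, inv_mul_cancel₀ (ne_of_lt hneg), neg_smul, one_smul]
            rwa [h2] at h1
          exact hu0 (hK.2.2.2.2 u hu hmem)
      exact ⟨1, fun _ => 1, fun _ => u, fun _ => one_pos.le,
        fun i => ⟨hu, hu0, by rw [hray]; exact isFace_rfl hK.2.1⟩, by simp⟩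
    · push_neg at hA
      obtain ⟨y0, hy0K, hy0⟩ := hA
      have bdryRep : ∀ v ∈ K, v ∉ interior (SK K) → ConeRep K v := by
        intro v hv hvb
        obtain ⟨K₀, hK₀, hvK₀, hface, hlt⟩ := pcone_bdry hK hv hvb
        exact ConeRep.of_face hface (IH K₀ hK₀ (by omega) v hvK₀)
      by_cases hri : u ∈ interior (SK K)
      · have hy0ne : y0 ≠ 0 := by
          rintro rfl
          exact hy0 0 (by simp)
        have hnu : -u ∉ K := fun h => hu0 (hK.2.2.2.2 u hu h)
        obtain ⟨s2, hs2, hz0K, hz0b⟩ := pcone_push hK hy0K (Submodule.subset_span hu) hnu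
        set z0 := y0 - s2 • u with hz0def
        have hz0ne : z0 ≠ 0 := by
          intro h
          exact hy0 s2 (by rw [← sub_eq_zero]; exact h)
        have hnz0 : -z0 ∉ K := fun h => hz0ne (hK.2.2.2.2 z0 hz0K h)
        obtain ⟨s3, hs3, hu'K, hu'b⟩ :=
          pcone_push hK hu (Submodule.subset_span hz0K) hnz0
        have hrep1 := bdryRep _ hu'K hu'b
        have hrep2 := bdryRep _ hz0K hz0b
        have hsplit : u = (u - s3 • z0) + s3 • z0 := by module
        rw [hsplit]
        exact hrep1.add (ConeRep.smul hs3 hrep2)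
      · exact bdryRep u hu hri

lemma cone_rep {K : Set E} (hK : IsPCone' K) {u : E} (hu : u ∈ K) :
    ∃ (d : ℕ) (c : Fin d → ℝ) (w : Fin d → E),
      d ≤ finrank ℝ (Submodule.span ℝ K) ∧ (∀ i, 0 < c i) ∧
      (∀ i, w i ∈ K ∧ w i ≠ 0 ∧ IsFace K (rayOf (w i))) ∧ u = ∑ i, c i • w i := by
  obtain ⟨k, c, w, hc, hw, hsum⟩ :=
    phase1 (finrank ℝ (Submodule.span ℝ K)) K hK le_rfl u hu
  obtain ⟨d, c', w', h1, h2, h3, h4⟩ :=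
    caratheodory_cone (fun v => v ∈ K ∧ v ≠ 0 ∧ IsFace K (rayOf v)) k c w hc hw
  refine ⟨d, c', w', ?_, h1, h2, by rw [hsum, ← h4]⟩
  -- linear independence gives the dimension bound
  set V := Submodule.span ℝ K with hV
  have hmem : ∀ i, w' i ∈ V := fun i => Submodule.subset_span (h2 i).1
  set w'' : Fin d → V := fun i => ⟨w' i, hmem i⟩ with hw''
  have hli : LinearIndependent ℝ w'' := by
    apply LinearIndependent.of_comp V.subtype
    exact h3
  simpa using hli.fintype_card_le_finrank

lemma mem_intrinsicInterior_iff' {s : Set E} {z : E} :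
    z ∈ intrinsicInterior ℝ s ↔ z ∈ affineSpan ℝ s ∧
      ∃ ε > 0, ∀ w, w ∈ affineSpan ℝ s → ‖w - z‖ < ε → w ∈ s := by
  constructor
  · rintro ⟨y, hy, rfl⟩
    refine ⟨y.2, ?_⟩
    obtain ⟨ε, hε, hball⟩ := Metric.mem_nhds_iff.mp (mem_interior_iff_mem_nhds.mp hy)
    refine ⟨ε, hε, fun w hw hwn => ?_⟩
    have : (⟨w, hw⟩ : affineSpan ℝ s) ∈ Metric.ball y ε := by
      rw [Metric.mem_ball, Subtype.dist_eq, dist_eq_norm]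
      exact hwn
    exact hball this
  · rintro ⟨hzA, ε, hε, h⟩
    refine ⟨⟨z, hzA⟩, ?_, rfl⟩
    rw [mem_interior_iff_mem_nhds, Metric.mem_nhds_iff]
    refine ⟨ε, hε, fun w hw => ?_⟩
    rw [Metric.mem_ball, Subtype.dist_eq, dist_eq_norm] at hw
    exact h w w.2 hw

lemma segment_mem_intrinsicInterior {s : Set E} (hs : Convex ℝ s) {x z : E}
    (hx : x ∈ s) (hz : z ∈ intrinsicInterior ℝ s) {t : ℝ} (ht0 : 0 ≤ t) (ht1 : t < 1) :
    (1 - t) • z + t • x ∈ intrinsicInterior ℝ s := by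
  rw [mem_intrinsicInterior_iff'] at hz ⊢
  obtain ⟨hzA, ε, hε, hball⟩ := hz
  have hxA : x ∈ affineSpan ℝ s := subset_affineSpan ℝ s hx
  have hcombA : (1 - t) • z + t • x ∈ affineSpan ℝ s := by
    have := AffineMap.lineMap_mem (k := ℝ) (Q := affineSpan ℝ s) t hzA hxA
    rwa [AffineMap.lineMap_apply_module] at this
  refine ⟨hcombA, (1 - t) * ε, by nlinarith, fun w hwA hwn => ?_⟩
  have h1t : (0:ℝ) < 1 - t := by linarith
  set dd := w - ((1 - t) • z + t • x) with hdd
  set w' := (1 - t)⁻¹ • dd + z with hw'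
  have hw'A : w' ∈ affineSpan ℝ s := by
    have hdir : dd ∈ (affineSpan ℝ s).direction := by
      have := AffineSubspace.vsub_mem_direction hwA hcombA
      simpa [hdd] using this
    have := AffineSubspace.vadd_mem_of_mem_direction
      (Submodule.smul_mem _ ((1 - t)⁻¹) hdir) hzA
    simpa [hw'] using this
  have hw's : w' ∈ s := by
    apply hball w' hw'A
    have : w' - z = (1 - t)⁻¹ • dd := by rw [hw']; abel
    rw [this, norm_smul, Real.norm_eq_abs, abs_of_pos (by positivity)]
    rw [inv_mul_lt_iff₀ h1t]
    exact hwn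
  have hwrep : w = (1 - t) • w' + t • x := by
    rw [hw', smul_add, smul_smul, mul_inv_cancel₀ (ne_of_gt h1t), one_smul, hdd]
    module
  rw [hwrep]
  exact hs hw's hx h1t.le ht0 (by ring)

lemma face_contains_of_ri {C G F : Set E} (hG : IsFace C G) (hF : Convex ℝ F) (hFC : F ⊆ C)
    (h : intrinsicInterior ℝ F ⊆ G) : F ⊆ G := by
  intro x hx
  have hne : (intrinsicInterior ℝ F).Nonempty := Set.Nonempty.intrinsicInterior hF ⟨x, hx⟩
  obtain ⟨z, hz⟩ := hne
  have hp : (1 - (1/2 : ℝ)) • z + (1/2 : ℝ) • x ∈ intrinsicInterior ℝ F :=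
    segment_mem_intrinsicInterior hF hx hz (by norm_num) (by norm_num)
  have hzF : z ∈ F := intrinsicInterior_subset hz
  exact (hG.2.2 x (hFC hx) z (hFC hzF)
    ⟨_, ⟨1/2, 1/2, by norm_num, by norm_num, by norm_num, by module⟩, h hp⟩).1


/-- Let `F` be a proper exposed face of a convex set `C` such that every
touching cone of `C` contained in `N(C,F)` is a normal cone of `C`. Then `F` is an
intersection of at most `dim N(C,F) − dim lin(C)^⊥` coatoms of the exposed face lattice
of `C`. -/
theorem stmt_17 (C : Set E) (hC : Convex ℝ C) (F : Set E) (hF : IsExpFace C F)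
    (hFne : F ≠ ∅) (hFC : F ≠ C)
    (hTC : ∀ T, IsTouchingCone C T → T ⊆ normalConeOf C F → IsNormalCone C T) :
    ∃ (d : ℕ) (G : Fin d → Set E),
      d ≤ Module.finrank ℝ (affineSpan ℝ (normalConeOf C F)).direction -
            Module.finrank ℝ (((affineSpan ℝ C).direction)ᗮ : Submodule ℝ E) ∧
      (∀ i, IsExpFace C (G i) ∧ G i ≠ ∅ ∧ G i ≠ C ∧
        ∀ G', IsExpFace C G' → G i ⊆ G' → G i ≠ G' → G' = C) ∧
      F = ⋂ i, G i := by
  rcases hF with hFe | hFc | ⟨u0, hu0ne, hFu0⟩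
  · exact absurd hFe hFne
  · exact absurd hFc hFC
  set D : Submodule ℝ E := (affineSpan ℝ C).direction with hD
  set L : Submodule ℝ E := Dᗮ with hL
  set N : Set E := normalConeOf C F with hNdef
  have hFconv : Convex ℝ F := hFu0 ▸ expFace_convex hC u0
  have hFsub : F ⊆ C := hFu0 ▸ expFace_subset C u0
  have hFface : IsFace C F := hFu0 ▸ expFace_isFace hC u0
  have hFne' : F.Nonempty := Set.nonempty_iff_ne_empty.mpr hFne
  obtain ⟨x0, hx0⟩ := Set.Nonempty.intrinsicInterior hFconv hFne'
  have hx0F : x0 ∈ F := intrinsicInterior_subset hx0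
  have hx0C : x0 ∈ C := hFsub hx0F
  have hmemN : ∀ v : E, v ∈ N ↔ ∀ x ∈ intrinsicInterior ℝ F, v ∈ normalCone C x := by
    intro v
    simp only [hNdef, normalConeOf, Set.mem_iInter]
  -- differences of points of C lie in D
  have hCD : ∀ {y z : E}, y ∈ C → z ∈ C → y - z ∈ D := by
    intro y z hy hz
    have := AffineSubspace.vsub_mem_direction (subset_affineSpan ℝ C hy)
      (subset_affineSpan ℝ C hz)
    simpa [hD] using this
  have hLperp : ∀ l ∈ L, ∀ {y z : E}, y ∈ C → z ∈ C → ⟪l, y - z⟫ = 0 := by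
    intro l hl y z hy hz
    have := (Submodule.mem_orthogonal D l).mp hl _ (hCD hy hz)
    rwa [real_inner_comm] at this
  -- exposed face membership vs normal cone membership
  have hexp_iff : ∀ (v x : E), x ∈ C → (x ∈ expFace C v ↔ v ∈ normalCone C x) := by
    intro v x hx
    constructor
    · intro hxe y hy
      rw [inner_sub_right]
      linarith [hxe.2 y hy]
    · intro hv
      refine ⟨hx, fun y hy => ?_⟩
      have := hv y hy
      rw [inner_sub_right] at this
      linarith
  -- if v ∈ L then expFace C v = C
  have hexpL : ∀ v ∈ L, expFace C v = C := by
    intro v hv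
    apply Set.eq_of_subset_of_subset (expFace_subset C v)
    intro x hx
    refine ⟨hx, fun y hy => ?_⟩
    have := hLperp v hv hy hx
    rw [inner_sub_right] at this
    linarith
  -- N is closed under adding elements of L, contains L, is a closed convex cone
  have hN_addL : ∀ v ∈ N, ∀ l ∈ L, v + l ∈ N := by
    intro v hv l hl
    rw [hmemN] at hv ⊢
    intro x hx y hy
    have h1 := hv x hx y hy
    have h2 : ⟪l, y - x⟫ = 0 := hLperp l hl hy (hFsub (intrinsicInterior_subset hx))
    rw [inner_add_left]
    linarith
  have hLN : (L : Set E) ⊆ N := by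
    intro l hl
    rw [hmemN]
    intro x hx y hy
    have h2 : ⟪l, y - x⟫ = 0 := hLperp l hl hy (hFsub (intrinsicInterior_subset hx))
    linarith
  have hNsub : N ⊆ normalCone C x0 := fun v hv => (hmemN v).mp hv x0 hx0
  have hNclosed : IsClosed N := by
    apply isClosed_biInter
    intro x hx
    have heq : normalCone C x = ⋂ y ∈ C, {u : E | ⟪u, y - x⟫ ≤ 0} := by
      ext u; simp [normalCone]
    rw [heq]
    apply isClosed_biInter
    intro y hy
    exact isClosed_le (Continuous.inner continuous_id continuous_const) continuous_const
  have hNconv : Convex ℝ N := by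
    intro a haN b hbN s t hs ht hst
    rw [hmemN] at haN hbN ⊢
    intro x hx y hy
    have h1 := haN x hx y hy
    have h2 := hbN x hx y hy
    rw [inner_add_left, real_inner_smul_left, real_inner_smul_left]
    nlinarith [mul_le_mul_of_nonneg_left h1 hs, mul_le_mul_of_nonneg_left h2 ht]
  have hNcone : ∀ t : ℝ, 0 ≤ t → ∀ v ∈ N, t • v ∈ N := by
    intro t ht v hv
    rw [hmemN] at hv ⊢
    intro x hx y hy
    have h1 := hv x hx y hy
    rw [real_inner_smul_left]
    exact mul_nonpos_of_nonneg_of_nonpos ht h1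
  have h0N : (0:E) ∈ N := by
    rw [hmemN]
    intro x hx y hy
    simp
  -- u0 ∈ N
  have hu0N : u0 ∈ N := by
    rw [hmemN]
    intro x hx
    have hxF : x ∈ F := intrinsicInterior_subset hx
    have hxC : x ∈ C := hFsub hxF
    exact (hexp_iff u0 x hxC).mp (by rw [hFu0] at hxF; exact hxF)
  -- the pointed cone K
  set K : Set E := N ∩ (D : Set E) with hKdef
  have hKD : K ⊆ (D : Set E) := fun v hv => hv.2
  have hKN : K ⊆ N := fun v hv => hv.1
  have hKpc : IsPCone' K := by
    refine ⟨hNclosed.inter (Submodule.closed_of_finiteDimensional D), ?_, ⟨h0N, zero_mem D⟩,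
      ?_, ?_⟩
    · exact hNconv.inter (D.convex)
    · exact fun t ht x hx => ⟨hNcone t ht x hx.1, Submodule.smul_mem D t hx.2⟩
    · -- pointed
      intro v hv hnv
      have h1 : ∀ y ∈ C, ⟪v, y - x0⟫ = 0 := by
        intro y hy
        have ha := hNsub hv.1 y hy
        have hb := hNsub hnv.1 y hy
        rw [inner_neg_left] at hb
        linarith
      have hvL : v ∈ L := by
        rw [hL]
        rw [Submodule.mem_orthogonal]
        intro z hz
        rw [hD, direction_affineSpan] at hz
        rw [real_inner_comm]
        induction hz using Submodule.span_induction with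
        | mem w hw =>
          obtain ⟨y, hy, z', hz', hwe⟩ := hw
          have e1 := h1 y hy
          have e2 := h1 z' hz'
          have hwe' : y - z' = w := by simpa [vsub_eq_sub] using hwe
          have hw2 : w = (y - x0) - (z' - x0) := by rw [← hwe']; abel
          rw [hw2, inner_sub_right, e1, e2]
          ring
        | zero => simp
        | add w₁ w₂ _ _ ih1 ih2 => rw [inner_add_right, ih1, ih2]; ring
        | smul a w _ ih => rw [inner_smul_right, ih]; simp
      have : ⟪v, v⟫ = 0 := by
        have := (Submodule.mem_orthogonal D v).mp hvL v hv.2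
        rwa [real_inner_comm] at this
      exact inner_self_eq_zero.mp this
  -- decompose u0
  set k0 : E := (D.orthogonalProjectionOnto u0 : E) with hk0def
  have hk0D : k0 ∈ D := (D.orthogonalProjectionOnto u0).2
  have hl0L : u0 - k0 ∈ L := D.sub_starProjection_mem_orthogonal u0
  have hk0N : k0 ∈ N := by
    have := hN_addL u0 hu0N (-(u0 - k0)) (neg_mem hl0L)
    simpa using this
  have hk0K : k0 ∈ K := ⟨hk0N, hk0D⟩
  have hk0ne : k0 ≠ 0 := by
    intro h
    apply hFC
    have hu0L : u0 ∈ L := by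
      have := hl0L
      rw [h, sub_zero] at this
      exact this
    rw [hFu0, hexpL u0 hu0L]
  obtain ⟨d, c, w, hdle, hcpos, hwprop, hk0sum⟩ := cone_rep hKpc hk0K
  have hd1 : 0 < d := by
    rcases Nat.eq_zero_or_pos d with h | h
    · exfalso
      apply hk0ne
      rw [hk0sum]
      subst h
      simp
    · exact h
  -- basic facts about the w i
  have hwK : ∀ i, w i ∈ K := fun i => (hwprop i).1
  have hwne : ∀ i, w i ≠ 0 := fun i => (hwprop i).2.1
  have hwnL : ∀ i, w i ∉ L := by
    intro i hiL
    apply hwne i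
    have h1 : ⟪w i, w i⟫ = 0 := by
      have := (Submodule.mem_orthogonal D (w i)).mp hiL (w i) (hwK i).2
      rwa [real_inner_comm] at this
    exact inner_self_eq_zero.mp h1
  -- factored lemma: vectors orthogonal to all y - x0 lie in L
  have hvL_of : ∀ v : E, (∀ y ∈ C, ⟪v, y - x0⟫ = 0) → v ∈ L := by
    intro v h1
    rw [hL, Submodule.mem_orthogonal]
    intro z hz
    rw [hD, direction_affineSpan] at hz
    rw [real_inner_comm]
    induction hz using Submodule.span_induction with
    | mem ww hw =>
      obtain ⟨y, hy, z', hz', hwe⟩ := hw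
      have e1 := h1 y hy
      have e2 := h1 z' hz'
      have hwe' : y - z' = ww := by simpa [vsub_eq_sub] using hwe
      have hw2 : ww = (y - x0) - (z' - x0) := by rw [← hwe']; abel
      rw [hw2, inner_sub_right, e1, e2]
      ring
    | zero => simp
    | add w₁ w₂ _ _ ih1 ih2 => rw [inner_add_right, ih1, ih2]; ring
    | smul a ww _ ih => rw [inner_smul_right, ih]; simp
  -- projections of elements of N lie in K
  have hprojK : ∀ v ∈ N, (D.orthogonalProjectionOnto v : E) ∈ K := by
    intro v hv
    refine ⟨?_, (D.orthogonalProjectionOnto v).2⟩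
    have hl : v - (D.orthogonalProjectionOnto v : E) ∈ L := D.sub_starProjection_mem_orthogonal v
    have := hN_addL v hv (-(v - (D.orthogonalProjectionOnto v : E))) (neg_mem hl)
    simpa using this
  -- the touching cones T i
  set T : Fin d → Set E := fun i => {z | ∃ l ∈ (L : Set E), ∃ t : ℝ, 0 ≤ t ∧ z = l + t • w i}
    with hTdef
  have hwT : ∀ i, w i ∈ T i := fun i => ⟨0, by simp, 1, by norm_num, by simp⟩
  have hTsubN : ∀ i, T i ⊆ N := by
    rintro i z ⟨l, hl, t, ht, rfl⟩
    have h1 : t • w i ∈ N := hNcone t ht _ (hKN (hwK i))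
    have := hN_addL _ h1 l hl
    rwa [add_comm] at this
  have hTface : ∀ i, IsFace N (T i) := by
    intro i
    refine ⟨?_, hTsubN i, ?_⟩
    · rintro z1 ⟨l1, hl1, t1, ht1, rfl⟩ z2 ⟨l2, hl2, t2, ht2, rfl⟩ a b ha hb hab
      refine ⟨a • l1 + b • l2,
        Submodule.add_mem _ (Submodule.smul_mem _ _ hl1) (Submodule.smul_mem _ _ hl2),
        a * t1 + b * t2, by positivity, by module⟩
    · rintro x hxN y hyN ⟨z, ⟨a, b, ha, hb, hab, hzeq⟩, ⟨l, hl, t, ht, hzT⟩⟩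
      have hPx : (D.orthogonalProjectionOnto x : E) ∈ K := hprojK x hxN
      have hPy : (D.orthogonalProjectionOnto y : E) ∈ K := hprojK y hyN
      have hPz1 : (D.orthogonalProjectionOnto z : E)
          = a • (D.orthogonalProjectionOnto x : E) + b • (D.orthogonalProjectionOnto y : E) := by
        rw [← hzeq, map_add, map_smul, map_smul]
        push_cast
        ring
      have hPz2 : (D.orthogonalProjectionOnto z : E) = t • w i := by
        have hproj_l : D.orthogonalProjectionOnto l = 0 :=
          Submodule.orthogonalProjectionOnto_apply_of_mem_orthogonal (by exact hl)
        have hproj_w : (D.orthogonalProjectionOnto (w i) : E) = w i :=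
          D.starProjection_eq_self_iff.mpr (hwK i).2
        rw [hzT, map_add, map_smul, hproj_l, zero_add]
        push_cast
        rw [hproj_w]
      have hray := (hwprop i).2.2
      have hmemray : (openSegment ℝ ((D.orthogonalProjectionOnto x : E))
          ((D.orthogonalProjectionOnto y : E)) ∩ rayOf (w i)).Nonempty := by
        refine ⟨t • w i, ⟨a, b, ha, hb, hab, by rw [← hPz1, hPz2]⟩, ⟨t, ht, rfl⟩⟩
      obtain ⟨⟨t1, ht1, hPx1⟩, ⟨t2, ht2, hPy1⟩⟩ :=
        hray.2.2 _ hPx _ hPy hmemray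
      constructor
      · exact ⟨x - (D.orthogonalProjectionOnto x : E),
          D.sub_starProjection_mem_orthogonal x, t1, ht1, by rw [← hPx1]; abel⟩
      · exact ⟨y - (D.orthogonalProjectionOnto y : E),
          D.sub_starProjection_mem_orthogonal y, t2, ht2, by rw [← hPy1]; abel⟩
  have hNisNC : IsNormalCone C N := ⟨F, hFface, hNdef⟩
  have hTnc : ∀ i, ∃ Fi, IsFace C Fi ∧ T i = normalConeOf C Fi :=
    fun i => hTC (T i) ⟨⟨w i, hwT i⟩, N, hNisNC, hTface i⟩ (hTsubN i)
  choose Fi hFiface hFieq using hTnc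
  have hFine : ∀ i, (Fi i).Nonempty := by
    intro i
    rw [Set.nonempty_iff_ne_empty]
    intro h
    have hTuniv : T i = Set.univ := by
      rw [hFieq i, h]
      simp [normalConeOf, intrinsicInterior_empty]
    have hCx0 : ∀ y ∈ C, y = x0 := by
      intro y hy
      have h1 : (y - x0) ∈ N := hTsubN i (hTuniv ▸ Set.mem_univ _)
      have h2 := hNsub h1 y hy
      have h3 : y - x0 = 0 := by
        have h4 : (0:ℝ) ≤ ⟪y - x0, y - x0⟫ := real_inner_self_nonneg
        exact inner_self_eq_zero.mp (le_antisymm h2 h4)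
      rwa [sub_eq_zero] at h3
    apply hFC
    apply Set.eq_of_subset_of_subset hFsub
    intro y hy
    rw [hCx0 y hy]
    exact hx0F
  -- membership in normalConeOf
  have hmemNCO : ∀ (S : Set E) (v : E),
      v ∈ normalConeOf C S ↔ ∀ x ∈ intrinsicInterior ℝ S, v ∈ normalCone C x := by
    intro S v
    simp only [normalConeOf, Set.mem_iInter]
  have hriFiG : ∀ i, intrinsicInterior ℝ (Fi i) ⊆ expFace C (w i) := by
    intro i x hx
    have hxC : x ∈ C := (hFiface i).2.1 (intrinsicInterior_subset hx)
    refine (hexp_iff (w i) x hxC).mpr ?_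
    have hwi : w i ∈ normalConeOf C (Fi i) := by rw [← hFieq i]; exact hwT i
    exact (hmemNCO (Fi i) (w i)).mp hwi x hx
  have hGine : ∀ i, (expFace C (w i)).Nonempty := by
    intro i
    obtain ⟨x, hx⟩ := Set.Nonempty.intrinsicInterior (hFiface i).1 (hFine i)
    exact ⟨x, hriFiG i hx⟩
  have hGineC : ∀ i, expFace C (w i) ≠ C := by
    intro i h
    apply hwnL i
    apply hvL_of
    intro y hy
    have h1 : y ∈ expFace C (w i) := by rw [h]; exact hy
    have h2 : x0 ∈ expFace C (w i) := by rw [h]; exact hx0C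
    have h3 := h1.2 x0 hx0C
    have h4 := h2.2 y hy
    rw [inner_sub_right]
    linarith
  -- ri F ⊆ G i, hence F ⊆ G i
  have hriFG : ∀ i, intrinsicInterior ℝ F ⊆ expFace C (w i) := by
    intro i x hx
    have hxC : x ∈ C := hFsub (intrinsicInterior_subset hx)
    exact (hexp_iff (w i) x hxC).mpr ((hmemN (w i)).mp (hKN (hwK i)) x hx)
  have hFsubG : ∀ i, F ⊆ expFace C (w i) := fun i =>
    face_contains_of_ri (expFace_isFace hC (w i)) hFconv hFsub (hriFG i)
  have hx0G : ∀ i, x0 ∈ expFace C (w i) := fun i => hriFG i hx0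
  -- coatom property
  have hcoatom : ∀ i, ∀ G', IsExpFace C G' → expFace C (w i) ⊆ G' →
      expFace C (w i) ≠ G' → G' = C := by
    intro i G' hG' hsub hne
    rcases hG' with rfl | rfl | ⟨w', hw'ne, rfl⟩
    · exact absurd (Set.subset_empty_iff.mp hsub) (Set.nonempty_iff_ne_empty.mp (hGine i))
    · rfl
    · have hw'T : w' ∈ T i := by
        rw [hFieq i]
        rw [hmemNCO]
        intro x hx
        have hxC : x ∈ C := (hFiface i).2.1 (intrinsicInterior_subset hx)
        exact (hexp_iff w' x hxC).mp (hsub (hriFiG i hx))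
      obtain ⟨l, hl, t, ht, hw'eq⟩ := hw'T
      rcases eq_or_lt_of_le ht with heq | hpos
      · exact hexpL w' (by rw [hw'eq, ← heq]; simpa using hl)
      · exfalso
        apply hne
        have hkey : ∀ x ∈ C, ∀ y ∈ C, ⟪w', y⟫ - ⟪w', x⟫ = t * (⟪w i, y⟫ - ⟪w i, x⟫) := by
          intro x hx y hy
          have e0 : ⟪l, y - x⟫ = 0 := hLperp l hl hy hx
          have e0' : ⟪l, y⟫ = ⟪l, x⟫ := by
            rw [inner_sub_right] at e0
            linarith
          rw [hw'eq, inner_add_left, inner_add_left, real_inner_smul_left,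
            real_inner_smul_left, e0']
          ring
        ext x
        constructor
        · intro hx
          refine ⟨hx.1, fun y hy => ?_⟩
          have h1 := hkey x hx.1 y hy
          have h2 := hx.2 y hy
          nlinarith
        · intro hx
          refine ⟨hx.1, fun y hy => ?_⟩
          have h1 := hkey x hx.1 y hy
          have h2 := hx.2 y hy
          nlinarith
  -- the dimension bound
  have hLdir : L ≤ (affineSpan ℝ N).direction := by
    intro v hv
    have := AffineSubspace.vsub_mem_direction (subset_affineSpan ℝ N (hLN hv))
      (subset_affineSpan ℝ N h0N)
    simpa [vsub_eq_sub] using this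
  have hKdir : Submodule.span ℝ K ≤ (affineSpan ℝ N).direction := by
    rw [Submodule.span_le]
    intro v hv
    have := AffineSubspace.vsub_mem_direction (subset_affineSpan ℝ N (hKN hv))
      (subset_affineSpan ℝ N h0N)
    simpa [vsub_eq_sub] using this
  have hdisj : L ⊓ Submodule.span ℝ K = ⊥ := by
    rw [eq_bot_iff]
    rintro v ⟨hv1, hv2⟩
    have hvD : v ∈ D := Submodule.span_le.mpr hKD hv2
    have : ⟪v, v⟫ = 0 := by
      have := (Submodule.mem_orthogonal D v).mp hv1 v hvD
      rwa [real_inner_comm] at this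
    simpa using inner_self_eq_zero.mp this
  have hsum2 := Submodule.finrank_sup_add_finrank_inf_eq L (Submodule.span ℝ K)
  rw [hdisj] at hsum2
  have hle2 : finrank ℝ (L ⊔ Submodule.span ℝ K : Submodule ℝ E)
      ≤ finrank ℝ (affineSpan ℝ N).direction :=
    Submodule.finrank_mono (sup_le hLdir hKdir)
  rw [finrank_bot] at hsum2
  -- assemble
  refine ⟨d, fun i => expFace C (w i), ?_, ?_, ?_⟩
  · omega
  · intro i
    exact ⟨Or.inr (Or.inr ⟨w i, hwne i, rfl⟩),
      Set.nonempty_iff_ne_empty.mp (hGine i), hGineC i, hcoatom i⟩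
  · apply Set.eq_of_subset_of_subset
    · exact fun x hx => Set.mem_iInter.mpr fun i => hFsubG i hx
    · intro x hx
      rw [Set.mem_iInter] at hx
      have hxC : x ∈ C := (hx ⟨0, hd1⟩).1
      rw [hFu0]
      refine ⟨hxC, fun y hy => ?_⟩
      have e0 : ⟪u0 - k0, y - x⟫ = 0 := hLperp _ hl0L hy hxC
      have hsplit : ⟪u0, y - x⟫ = ⟪u0 - k0, y - x⟫ + ⟪k0, y - x⟫ := by
        rw [← inner_add_left, sub_add_cancel]
      have hterm : ∀ i, ⟪w i, y - x⟫ ≤ 0 := by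
        intro i
        have hxw : ⟪w i, x0⟫ ≤ ⟪w i, x⟫ := (hx i).2 x0 hx0C
        have hyw : ⟪w i, y⟫ ≤ ⟪w i, x0⟫ := (hx0G i).2 y hy
        rw [inner_sub_right]
        linarith
      have hk0in : ⟪k0, y - x⟫ ≤ 0 := by
        rw [hk0sum, sum_inner]
        apply Finset.sum_nonpos
        intro i _
        rw [real_inner_smul_left]
        exact mul_nonpos_of_nonneg_of_nonpos (hcpos i).le (hterm i)
      have : ⟪u0, y - x⟫ ≤ 0 := by rw [hsplit, e0, zero_add]; exact hk0in
      rw [inner_sub_right] at this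
      linarith
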